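/- arXiv:0901.3273 — 3 statements merged into one kernel-verified Lean document; each statement's English description precedes it below -/
import Mathlib

section
/- The first loop equation holds: W₂(x,x) + W₁(x)² = -P₁(x), where W₁(x) = -Tr(D(x)M(x)), W₂(x,x) = -(1/2)Tr(M'(x)²), and P₁(x) = det D(x). -/
open Matrix

/-- First loop equation: `W₂(x,x) + W₁(x)² = -P₁(x)` with
`W₁ = -Tr(DM)`, `W₂(x,x) = -(1/2) Tr(M'²)` where `M' = [D,M]`, and `P₁ = det D`. -/
theorem first_loop_equation
    (Ψ D : ℝ → Matrix (Fin 2) (Fin 2) ℝ)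
    (hΨ : ∀ x i j, HasDerivAt (fun t => Ψ t i j) ((D x * Ψ x) i j) x)
    (htr : ∀ x, Matrix.trace (D x) = 0)
    (hdet : ∀ x, (Ψ x).det = 1)
    (ψ φ : ℝ → Fin 2 → ℝ)
    (hψ : ∀ x i, ψ x i = Ψ x i 0)
    (hφ : ∀ x i, φ x i = Ψ x i 1)
    (M : ℝ → Matrix (Fin 2) (Fin 2) ℝ)
    (hM : ∀ x, M x = Matrix.vecMulVec (φ x) (Matrix.vecMul (ψ x) !![(0 : ℝ), 1; -1, 0]))
    (M' : ℝ → Matrix (Fin 2) (Fin 2) ℝ)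
    (hM' : ∀ x, M' x = D x * M x - M x * D x)
    (x : ℝ) :
    -(1 / 2) * Matrix.trace (M' x * M' x) + (Matrix.trace (D x * M x)) ^ 2 =
      -(D x).det := by
  have hdetx := hdet x
  have htrx := htr x
  rw [Matrix.det_fin_two] at hdetx
  rw [Matrix.trace_fin_two] at htrx
  have hD : D x = !![D x 0 0, D x 0 1; D x 1 0, D x 1 1] := by
    ext i j; fin_cases i <;> fin_cases j <;> rfl
  have hMx : M x = !![Ψ x 0 1 * -(Ψ x 1 0), Ψ x 0 1 * Ψ x 0 0;
      Ψ x 1 1 * -(Ψ x 1 0), Ψ x 1 1 * Ψ x 0 0] := by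
    rw [hM x]
    ext i j
    fin_cases i <;> fin_cases j <;>
      simp [Matrix.vecMulVec_apply, Matrix.vecMul, dotProduct,
        Matrix.vecHead, Matrix.vecTail, Fin.sum_univ_two, hψ, hφ] <;> ring
  rw [hM' x, hMx, hD]
  rw [show ((!![D x 0 0, D x 0 1; D x 1 0, D x 1 1] : Matrix (Fin 2) (Fin 2) ℝ)).det
      = D x 0 0 * D x 1 1 - D x 0 1 * D x 1 0 from Matrix.det_fin_two_of _ _ _ _]
  set a := Ψ x 0 0; set b := Ψ x 0 1; set c := Ψ x 1 0; set d := Ψ x 1 1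
  set p := D x 0 0; set q := D x 0 1; set r := D x 1 0; set s := D x 1 1
  simp only [Matrix.trace_fin_two, Matrix.mul_apply, Matrix.sub_apply,
    Fin.sum_univ_two, Matrix.of_apply, Matrix.cons_val', Matrix.cons_val_zero, Matrix.cons_val_one,
    Matrix.head_cons, Matrix.empty_val', Matrix.cons_val_fin_one, Matrix.head_fin_const]
  linear_combination ((a * d - b * c) *
      (p * (b * -c) + r * (b * a) + (q * (d * -c) + s * (d * a)))) * htrx
    - ((p * s - q * r) * (a * d - b * c + 1)) * hdetx
end

section
/- For any 2×2 matrices D (traceless) and M with M² = M and Tr M = 1: Tr(D M)² = Tr(D M D M), and -(1/2)Tr([D,M]²) + Tr(DMDM) = Tr(D² M). -/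
open Matrix

/-- Algebraic core of the `n = 0` loop equation: for 2×2 matrices with `Tr D = 0`,
`M² = M`, `Tr M = 1`: `(Tr DM)² = Tr(DMDM)` and `-(1/2)Tr([D,M]²) + Tr(DMDM) = Tr(D²M)`. -/
theorem loop_equation_algebraic_core {R : Type*} [CommRing R] [Invertible (2 : R)]
    (D M : Matrix (Fin 2) (Fin 2) R)
    (hD : Matrix.trace D = 0) (hM : M * M = M) (htrM : Matrix.trace M = 1) :
    (Matrix.trace (D * M)) ^ 2 = Matrix.trace (D * M * D * M) ∧
    -(⅟(2 : R) * Matrix.trace ((D * M - M * D) * (D * M - M * D))) +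
        Matrix.trace (D * M * D * M) =
      Matrix.trace (D * D * M) := by
  constructor
  · -- entrywise, using det M = 0
    have h00 := congrFun (congrFun hM 0) 0
    have h11 := congrFun (congrFun hM 1) 1
    simp only [Matrix.mul_apply, Fin.sum_univ_two] at h00 h11
    simp only [Matrix.trace_fin_two, Matrix.mul_apply, Fin.sum_univ_two] at hD htrM ⊢
    have h2 : (2 : R) * (M 0 0 * M 1 1 - M 0 1 * M 1 0) = 0 := by
      linear_combination (M 0 0 + M 1 1) * htrM - h00 - h11
    have hdet : M 0 0 * M 1 1 - M 0 1 * M 1 0 = 0 := by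
      calc M 0 0 * M 1 1 - M 0 1 * M 1 0
          = ⅟(2 : R) * ((2 : R) * (M 0 0 * M 1 1 - M 0 1 * M 1 0)) :=
            (invOf_mul_cancel_left _ _).symm
        _ = 0 := by rw [h2, mul_zero]
    linear_combination (2 * (D 0 0 * D 1 1 - D 0 1 * D 1 0)) * hdet
  · have t1 : Matrix.trace (D * M * (M * D)) = Matrix.trace (D * D * M) := by
      rw [show D * M * (M * D) = D * (M * M) * D by noncomm_ring, hM, trace_mul_comm,
        ← mul_assoc]
    have t2 : Matrix.trace (M * D * (D * M)) = Matrix.trace (D * D * M) := by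
      rw [show M * D * (D * M) = M * (D * D * M) by noncomm_ring, trace_mul_comm,
        show D * D * M * M = D * D * (M * M) by noncomm_ring, hM]
    have t3 : Matrix.trace (M * D * (M * D)) = Matrix.trace (D * M * D * M) := by
      rw [show M * D * (M * D) = M * (D * M * D) by noncomm_ring, trace_mul_comm]
    have expand : (D * M - M * D) * (D * M - M * D)
        = D * M * D * M - D * M * (M * D) - M * D * (D * M) + M * D * (M * D) := by
      noncomm_ring
    have key : Matrix.trace ((D * M - M * D) * (D * M - M * D))
        = 2 * Matrix.trace (D * M * D * M) - 2 * Matrix.trace (D * D * M) := by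
      rw [expand, trace_add, trace_sub, trace_sub, t1, t2, t3]; ring
    have h2 : ⅟(2 : R) * (2 : R) = 1 := invOf_mul_self 2
    rw [key]
    linear_combination (Matrix.trace (D * D * M) - Matrix.trace (D * M * D * M)) * h2
end

section
/- The coincident non-connected 2-point function is rational: W₂(x,x) + W₁(x)² = b(x)c(x) - a(x)d(x), where D = [[a,b],[c,d]]. -/
open Filter

/-- `W₂(x,x) + W₁(x)² = b(x)c(x) - a(x)d(x)`, where `W₂(x,x)` is the coincident limit
of `-K(x,x')K(x',x) - 1/(x-x')²`. -/
theorem W2_coincident_rational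
    (a b c d ψ ψt φ φt : ℝ → ℝ)
    (htr : ∀ x, a x + d x = 0)
    (hψ : ∀ x, HasDerivAt ψ (a x * ψ x + b x * ψt x) x)
    (hψt : ∀ x, HasDerivAt ψt (c x * ψ x + d x * ψt x) x)
    (hφ : ∀ x, HasDerivAt φ (a x * φ x + b x * φt x) x)
    (hφt : ∀ x, HasDerivAt φt (c x * φ x + d x * φt x) x)
    (hdet : ∀ x, ψ x * φt x - ψt x * φ x = 1)
    (K : ℝ → ℝ → ℝ)
    (hK : ∀ x₁ x₂, K x₁ x₂ = (ψ x₁ * φt x₂ - ψt x₁ * φ x₂) / (x₁ - x₂))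
    (W₁ : ℝ → ℝ)
    (hW₁ : ∀ x, W₁ x = deriv ψ x * φt x - deriv ψt x * φ x)
    (x : ℝ) :
    Filter.Tendsto (fun x' => -K x x' * K x' x - 1 / (x - x') ^ 2)
      (nhdsWithin x {x}ᶜ)
      (nhds (b x * c x - a x * d x - W₁ x ^ 2)) := by
  have hd : d x = -a x := by linarith [htr x]
  set g₁ : ℝ → ℝ := fun t => ψ x * ψt t - ψt x * ψ t with hg₁
  set g₂ : ℝ → ℝ := fun t => φt x * φ t - φ x * φt t with hg₂
  set D₁ : ℝ := ψ x * (c x * ψ x + d x * ψt x) - ψt x * (a x * ψ x + b x * ψt x) with hD₁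
  set D₂ : ℝ := φt x * (a x * φ x + b x * φt x) - φ x * (c x * φ x + d x * φt x) with hD₂
  have h1 : HasDerivAt g₁ D₁ x :=
    ((hψt x).const_mul (ψ x)).sub ((hψ x).const_mul (ψt x))
  have h2 : HasDerivAt g₂ D₂ x :=
    ((hφ x).const_mul (φt x)).sub ((hφt x).const_mul (φ x))
  have t1 := hasDerivAt_iff_tendsto_slope.mp h1
  have t2 := hasDerivAt_iff_tendsto_slope.mp h2
  have tm : Tendsto (fun t => slope g₁ x t * slope g₂ x t) (nhdsWithin x {x}ᶜ)
      (nhds (D₁ * D₂)) := t1.mul t2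
  -- the limit value agrees
  have hdψ : deriv ψ x = a x * ψ x + b x * ψt x := (hψ x).deriv
  have hdψt : deriv ψt x = c x * ψ x + d x * ψt x := (hψt x).deriv
  have hval : D₁ * D₂ = b x * c x - a x * d x - W₁ x ^ 2 := by
    rw [hD₁, hD₂, hW₁ x, hdψ, hdψt, hd]
    linear_combination ((a x ^ 2 + b x * c x) * (1 + ψ x * φt x - ψt x * φ x)) * hdet x
  rw [← hval]
  refine tm.congr' ?_
  filter_upwards [self_mem_nhdsWithin] with t ht
  have htx : t ≠ x := by simpa using ht
  have h0 : t - x ≠ 0 := sub_ne_zero.mpr htx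
  have h0' : x - t ≠ 0 := sub_ne_zero.mpr (Ne.symm htx)
  have hs1 : slope g₁ x t = g₁ t / (t - x) := by
    rw [slope_def_field, hg₁]
    simp only
    field_simp
    ring
  have hs2 : slope g₂ x t = g₂ t / (t - x) := by
    rw [slope_def_field, hg₂]
    simp only
    field_simp
    ring
  have h1 := hdet t
  have h2 := hdet x
  have hnum : (ψ x * φt t - ψt x * φ t) * (ψ t * φt x - ψt t * φ x) - 1
      = g₁ t * g₂ t := by
    simp only [hg₁, hg₂]
    linear_combination (ψ x * φt x - ψt x * φ x) * h1 + h2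
  have e1 : -((ψ x * φt t - ψt x * φ t) / (x - t)) *
      ((ψ t * φt x - ψt t * φ x) / (t - x)) - 1 / (x - t) ^ 2
      = ((ψ x * φt t - ψt x * φ t) * (ψ t * φt x - ψt t * φ x) - 1) / (x - t) ^ 2 := by
    field_simp
    ring
  rw [hs1, hs2, hK x t, hK t x, e1, hnum, div_mul_div_comm]
  congr 1
  ring
end
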